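/- Let a ∈ [0,1) and set b = √(9 − 8a), so b ∈ (1,3]. Then for every u ∈ (0,1) one has f_a(u) ≥ (b+3)³/(8(b+1)), with equality if and only if u = (b+1)/(b+3); moreover this minimum value (b+3)³/(8(b+1)) lies in the interval (4, 27/4], equaling 27/4 when a = 0. In particular f_a(u) > 4 for all u ∈ (0,1), and f_a(u) → ∞ as u → 0⁺ and as u → 1⁻. -/

import Mathlib

noncomputable section

/-- `f_a(u) = a/(u(1−u)) + (1−a)/(u²(1−u))`. -/
def fFn (a u : ℝ) : ℝ := a / (u * (1 - u)) + (1 - a) / (u ^ 2 * (1 - u))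

lemma fFn_eq (a u : ℝ) (hu0 : 0 < u) (hu1 : u < 1) :
    fFn a u = (a * u + (1 - a)) / (u ^ 2 * (1 - u)) := by
  have h1 : u ≠ 0 := ne_of_gt hu0
  have h2 : (1 : ℝ) - u ≠ 0 := by linarith
  unfold fFn
  field_simp

lemma tendsto_one_div_sub (c : ℝ) :
    Filter.Tendsto (fun u : ℝ => 1 / (c - u)) (nhdsWithin c (Set.Iio c)) Filter.atTop := by
  have h1 : Filter.Tendsto (fun u : ℝ => c - u) (nhdsWithin c (Set.Iio c))
      (nhdsWithin 0 (Set.Ioi 0)) := by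
    apply tendsto_nhdsWithin_of_tendsto_nhds_of_eventually_within
    · have : Filter.Tendsto (fun u : ℝ => c - u) (nhds c) (nhds (c - c)) :=
        (continuous_const.sub continuous_id).tendsto c
      simpa using this.mono_left nhdsWithin_le_nhds
    · filter_upwards [self_mem_nhdsWithin] with x hx
      simp only [Set.mem_Iio] at hx
      simp [Set.mem_Ioi]; linarith
  have h2 := tendsto_inv_nhdsGT_zero.comp h1
  simpa [one_div, Function.comp_def] using h2

theorem stmt9 (a : ℝ) (ha : a ∈ Set.Ico (0 : ℝ) 1)
    (b : ℝ) (hb : b = Real.sqrt (9 - 8 * a)) :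
    b ∈ Set.Ioc (1 : ℝ) 3 ∧
    (∀ u ∈ Set.Ioo (0 : ℝ) 1,
      (b + 3) ^ 3 / (8 * (b + 1)) ≤ fFn a u ∧
      (fFn a u = (b + 3) ^ 3 / (8 * (b + 1)) ↔ u = (b + 1) / (b + 3))) ∧
    (b + 3) ^ 3 / (8 * (b + 1)) ∈ Set.Ioc (4 : ℝ) (27 / 4) ∧
    (a = 0 → (b + 3) ^ 3 / (8 * (b + 1)) = 27 / 4) ∧
    (∀ u ∈ Set.Ioo (0 : ℝ) 1, 4 < fFn a u) ∧
    Filter.Tendsto (fFn a) (nhdsWithin 0 (Set.Ioi 0)) Filter.atTop ∧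
    Filter.Tendsto (fFn a) (nhdsWithin 1 (Set.Iio 1)) Filter.atTop := by
  obtain ⟨ha0, ha1⟩ := ha
  have hb0 : 0 ≤ b := hb ▸ Real.sqrt_nonneg _
  have hb2 : b ^ 2 = 9 - 8 * a := by
    rw [hb, sq, Real.mul_self_sqrt (by linarith)]
  have hb1 : 1 < b := by nlinarith
  have hb3 : b ≤ 3 := by nlinarith
  have ha' : a = (9 - b ^ 2) / 8 := by linarith
  have hbp : (0 : ℝ) < 8 * (b + 1) := by linarith
  have hb3p : (0 : ℝ) < b + 3 := by linarith
  -- key algebraic identity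
  have key : ∀ u : ℝ, 8 * (b + 1) * (a * u + (1 - a)) - (b + 3) ^ 3 * (u ^ 2 * (1 - u)) =
      ((b + 3) * u - (b + 1)) ^ 2 * ((b + 3) * u + (b - 1)) := by
    intro u; rw [ha']; ring
  -- main inequality part
  have hmain : ∀ u ∈ Set.Ioo (0 : ℝ) 1,
      (b + 3) ^ 3 / (8 * (b + 1)) ≤ fFn a u ∧
      (fFn a u = (b + 3) ^ 3 / (8 * (b + 1)) ↔ u = (b + 1) / (b + 3)) := by
    intro u hu
    obtain ⟨hu0, hu1⟩ := hu
    have hD : 0 < u ^ 2 * (1 - u) := mul_pos (pow_pos hu0 2) (by linarith)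
    have hfac : 0 < (b + 3) * u + (b - 1) := by nlinarith
    have hfu := fFn_eq a u hu0 hu1
    constructor
    · rw [hfu, div_le_div_iff₀ hbp hD]
      nlinarith [key u, mul_nonneg (sq_nonneg ((b + 3) * u - (b + 1))) hfac.le]
    · rw [hfu, div_eq_div_iff hD.ne' hbp.ne']
      constructor
      · intro h
        have hQ : ((b + 3) * u - (b + 1)) ^ 2 * ((b + 3) * u + (b - 1)) = 0 := by
          rw [← key u]; linarith
        have hsq : ((b + 3) * u - (b + 1)) ^ 2 = 0 := by
          rcases mul_eq_zero.1 hQ with h' | h'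
          · exact h'
          · linarith
        have : (b + 3) * u - (b + 1) = 0 := by
          exact pow_eq_zero_iff (by norm_num) |>.1 hsq
        field_simp
        linarith
      · intro h
        have hQ := key u
        have : (b + 3) * u - (b + 1) = 0 := by
          rw [h]; field_simp; ring
        nlinarith [key u]
  refine ⟨⟨hb1, hb3⟩, hmain, ⟨?_, ?_⟩, ?_, ?_, ?_, ?_⟩
  · -- 4 < min
    rw [lt_div_iff₀ hbp]
    nlinarith [mul_pos (sub_pos.2 hb1) (show (0:ℝ) < b ^ 2 + 10 * b + 5 by nlinarith)]
  · -- min ≤ 27/4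
    rw [div_le_div_iff₀ hbp (by norm_num : (0:ℝ) < 4)]
    nlinarith [mul_nonneg (sub_nonneg.2 hb3) (show (0:ℝ) ≤ b ^ 2 + 12 * b + 9 by nlinarith)]
  · -- a = 0 case
    intro h0
    have : b = 3 := by
      rw [hb, h0, show (9:ℝ) - 8 * 0 = 3 ^ 2 by norm_num, Real.sqrt_sq (by norm_num : (0:ℝ) ≤ 3)]
    rw [this]; norm_num
  · -- fFn > 4
    intro u hu
    have h4 : 4 < (b + 3) ^ 3 / (8 * (b + 1)) := by
      rw [lt_div_iff₀ hbp]
      nlinarith [mul_pos (sub_pos.2 hb1) (show (0:ℝ) < b ^ 2 + 10 * b + 5 by nlinarith)]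
    exact lt_of_lt_of_le h4 (hmain u hu).1
  · -- tendsto at 0⁺
    have hbound : ∀ᶠ u in nhdsWithin 0 (Set.Ioi 0), 1 / u ≤ fFn a u := by
      filter_upwards [Ioo_mem_nhdsGT_of_mem (by norm_num : (0:ℝ) ∈ Set.Ico 0 1)] with u hu
      obtain ⟨hu0, hu1⟩ := hu
      have hD : 0 < u ^ 2 * (1 - u) := mul_pos (pow_pos hu0 2) (by linarith)
      rw [fFn_eq a u hu0 hu1, div_le_div_iff₀ hu0 hD]
      nlinarith [mul_nonneg hu0.le (mul_nonneg (sub_nonneg.2 ha1.le) (sub_nonneg.2 hu1.le)),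
        pow_pos hu0 3]
    have h1u : Filter.Tendsto (fun u : ℝ => 1 / u) (nhdsWithin 0 (Set.Ioi 0)) Filter.atTop := by
      simpa [one_div] using tendsto_inv_nhdsGT_zero
    exact Filter.tendsto_atTop_mono' _ hbound h1u
  · -- tendsto at 1⁻
    have hbound : ∀ᶠ u in nhdsWithin 1 (Set.Iio 1), 1 / (1 - u) ≤ fFn a u := by
      filter_upwards [Ioo_mem_nhdsLT_of_mem
        (by constructor <;> norm_num : (1:ℝ) ∈ Set.Ioc 0 1)] with u hu
      obtain ⟨hu0, hu1⟩ := hu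
      have hD : 0 < u ^ 2 * (1 - u) := mul_pos (pow_pos hu0 2) (by linarith)
      rw [fFn_eq a u hu0 hu1, div_le_div_iff₀ (by linarith : (0:ℝ) < 1 - u) hD]
      nlinarith [mul_nonneg (sq_nonneg (1 - u)) (show (0:ℝ) ≤ 1 + u - a by linarith)]
    exact Filter.tendsto_atTop_mono' _ hbound (tendsto_one_div_sub 1)
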